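/- In the Minimum Spanning Eulerian Subgraph problem, if an edge of the input Eulerian multigraph has multiplicity at least 4, then reducing its multiplicity by 2 yields an equivalent instance: the resulting multigraph is still connected and Eulerian, and the optimal solution values coincide. In particular, there is always an optimal solution in which every edge has multiplicity at most 2. -/

import Mathlib

/-- Degree of a vertex in a (loopless) multigraph given by a multiset of edges. -/
def mDeg {V : Type*} [DecidableEq V] (E : Multiset (Sym2 V)) (v : V) : ℕ :=
  Multiset.countP (fun e => v ∈ e) E

/-- Connectivity of the multigraph given by edge multiset `E`. -/
def mConn {V : Type*} (E : Multiset (Sym2 V)) : Prop :=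
  ∀ a b : V, Relation.ReflTransGen (fun x y => s(x, y) ∈ E) a b

/-- A feasible solution to Minimum Spanning Eulerian Subgraph on instance `E`:
a sub-multiset which is spanning, connected, and has all degrees even. -/
def mesSol {V : Type*} [DecidableEq V] (E E' : Multiset (Sym2 V)) : Prop :=
  E' ≤ E ∧ mConn E' ∧ ∀ v : V, Even (mDeg E' v)

/-- Total weight of a multigraph (with multiplicity), weights on the underlying simple edges. -/
def mesWeight {V : Type*} (w : Sym2 V → ℝ) (E' : Multiset (Sym2 V)) : ℝ :=
  (E'.map w).sum

section aux
variable {V : Type*} [DecidableEq V]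

lemma count_pair (e a : Sym2 V) :
    (({e, e} : Multiset (Sym2 V))).count a = if a = e then 2 else 0 := by
  by_cases h : a = e <;> simp [h, Multiset.insert_eq_cons, Multiset.count_cons, Multiset.count_singleton]

lemma pair_le {F : Multiset (Sym2 V)} {e : Sym2 V} (h : 2 ≤ F.count e) :
    ({e, e} : Multiset (Sym2 V)) ≤ F := by
  rw [Multiset.le_iff_count]
  intro a
  rw [count_pair]
  split
  · next h' => subst h'; omega
  · omega

lemma sub_pair_add {F : Multiset (Sym2 V)} {e : Sym2 V} (h : 2 ≤ F.count e) :
    F - {e, e} + {e, e} = F := tsub_add_cancel_of_le (pair_le h)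

lemma mem_sub_pair {F : Multiset (Sym2 V)} {e : Sym2 V} (h : 3 ≤ F.count e) {a : Sym2 V}
    (ha : a ∈ F) : a ∈ F - {e, e} := by
  rw [← Multiset.count_pos] at ha ⊢
  rw [Multiset.count_sub, count_pair]
  split
  · next h' => subst h'; omega
  · omega

lemma mConn_mono {F F' : Multiset (Sym2 V)} (h : ∀ a ∈ F, a ∈ F') (hc : mConn F) : mConn F' :=
  fun a b => Relation.ReflTransGen.mono (r := fun x y => s(x, y) ∈ F) (fun x y hxy => h _ hxy) a b (hc a b)

lemma mDeg_pair (e : Sym2 V) (v : V) :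
    mDeg ({e, e} : Multiset (Sym2 V)) v = if v ∈ e then 2 else 0 := by
  unfold mDeg
  by_cases h : v ∈ e <;> simp [Multiset.insert_eq_cons, ← Multiset.cons_zero, Multiset.countP_cons, h]

lemma even_mDeg_sub_pair {F : Multiset (Sym2 V)} {e : Sym2 V} (h : 2 ≤ F.count e) {v : V}
    (hv : Even (mDeg F v)) : Even (mDeg (F - {e, e}) v) := by
  have h2 : mDeg F v = mDeg (F - {e, e}) v + mDeg ({e, e} : Multiset (Sym2 V)) v := by
    conv_lhs => rw [← sub_pair_add h]
    exact (Multiset.countP_add _ _ _)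
  have h3 : Even (mDeg ({e, e} : Multiset (Sym2 V)) v) := by
    rw [mDeg_pair]; split <;> decide
  rw [h2, Nat.even_add] at hv
  exact hv.mpr h3

lemma mesWeight_sub_pair (w : Sym2 V → ℝ) {F : Multiset (Sym2 V)} {e : Sym2 V}
    (h : 2 ≤ F.count e) :
    mesWeight w (F - {e, e}) = mesWeight w F - (w e + w e) := by
  have h1 : mesWeight w (F - {e, e}) + mesWeight w ({e, e} : Multiset (Sym2 V)) = mesWeight w F := by
    conv_rhs => rw [← sub_pair_add h]
    simp only [mesWeight, Multiset.map_add, Multiset.sum_add]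
  have hp : mesWeight w ({e, e} : Multiset (Sym2 V)) = w e + w e := by
    simp [mesWeight, Multiset.insert_eq_cons]
  linarith

lemma card_sub_pair {F : Multiset (Sym2 V)} {e : Sym2 V} (h : 2 ≤ F.count e) :
    Multiset.card (F - {e, e}) + 2 = Multiset.card F := by
  have h1 := congrArg Multiset.card (sub_pair_add h)
  simpa using h1

lemma sol_reduce {E F : Multiset (Sym2 V)} (hF : mesSol E F) {e : Sym2 V}
    (h3 : 3 ≤ F.count e) : mesSol E (F - {e, e}) := by
  obtain ⟨hle, hc, hev⟩ := hF
  exact ⟨le_trans tsub_le_self hle,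
    mConn_mono (fun a ha => mem_sub_pair h3 ha) hc,
    fun v => even_mDeg_sub_pair (by omega) (hev v)⟩

lemma isLeast_iff_aux {S1 S2 : Set ℝ} (h1 : S2 ⊆ S1) (h2 : ∀ x ∈ S1, ∃ y ∈ S2, y ≤ x) (m : ℝ) :
    IsLeast S1 m ↔ IsLeast S2 m := by
  constructor
  · rintro ⟨hm, hlb⟩
    obtain ⟨y, hy, hyx⟩ := h2 m hm
    have hym : y = m := le_antisymm hyx (hlb (h1 hy))
    exact ⟨hym ▸ hy, fun x hx => hlb (h1 hx)⟩
  · rintro ⟨hm, hlb⟩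
    refine ⟨h1 hm, fun x hx => ?_⟩
    obtain ⟨y, hy, hyx⟩ := h2 x hx
    exact (hlb hy).trans hyx

end aux

/-- if an edge `e0` has multiplicity at least 4 in the input of Minimum Spanning
Eulerian Subgraph, then removing two copies of it yields an equivalent instance (still
connected and Eulerian, same optimal value); in particular there is always an optimal
solution in which every edge has multiplicity at most 2. -/


theorem stmt7 {V : Type*} [Fintype V] [DecidableEq V]
    (E : Multiset (Sym2 V)) (w : Sym2 V → ℝ) (hw : ∀ e, 0 ≤ w e)
    (hloop : ∀ e ∈ E, ¬ e.IsDiag)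
    (hconn : mConn E) (heven : ∀ v : V, Even (mDeg E v))
    (e0 : Sym2 V) (he0 : 4 ≤ E.count e0) :
    mConn (E - {e0, e0}) ∧
    (∀ v : V, Even (mDeg (E - {e0, e0}) v)) ∧
    (∀ m : ℝ,
      IsLeast {x | ∃ E', mesSol E E' ∧ mesWeight w E' = x} m ↔
      IsLeast {x | ∃ E', mesSol (E - {e0, e0}) E' ∧ mesWeight w E' = x} m) ∧
    (∃ E', mesSol E E' ∧
      (∀ E'', mesSol E E'' → mesWeight w E' ≤ mesWeight w E'') ∧
      ∀ e : Sym2 V, E'.count e ≤ 2) := by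
  have h3E : 3 ≤ E.count e0 := by omega
  have hconn' : mConn (E - {e0, e0}) :=
    mConn_mono (fun a ha => mem_sub_pair h3E ha) hconn
  have heven' : ∀ v : V, Even (mDeg (E - {e0, e0}) v) :=
    fun v => even_mDeg_sub_pair (by omega) (heven v)
  refine ⟨hconn', heven', ?_, ?_⟩
  · -- equality of optimal values
    intro m
    apply isLeast_iff_aux
    · rintro x ⟨E', ⟨hle, hc, hev⟩, rfl⟩
      exact ⟨E', ⟨hle.trans tsub_le_self, hc, hev⟩, rfl⟩
    · rintro x ⟨E', hs, rfl⟩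
      by_cases hc : E'.count e0 + 2 ≤ E.count e0
      · refine ⟨_, ⟨E', ⟨?_, hs.2.1, hs.2.2⟩, rfl⟩, le_refl _⟩
        rw [Multiset.le_iff_count]
        intro a
        rw [Multiset.count_sub, count_pair]
        have hca := Multiset.le_iff_count.mp hs.1 a
        split
        · next h' => subst h'; omega
        · omega
      · have h3 : 3 ≤ E'.count e0 := by
          have := Multiset.count_le_of_le e0 hs.1
          omega
        obtain ⟨_, hc', hev'⟩ := sol_reduce hs h3
        refine ⟨_, ⟨E' - {e0, e0}, ⟨?_, hc', hev'⟩, rfl⟩, ?_⟩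
        · exact tsub_le_tsub_right hs.1 _
        · rw [mesWeight_sub_pair w (by omega)]
          have := hw e0
          linarith
  · -- existence of an optimal solution with multiplicities ≤ 2
    have hfin : {E' : Multiset (Sym2 V) | mesSol E E'}.Finite := by
      apply Set.Finite.subset (E.powerset.toFinset.finite_toSet)
      intro E' hE'
      simp only [Finset.coe_sort_coe, Multiset.mem_toFinset, Multiset.mem_powerset,
        Finset.mem_coe]
      exact hE'.1
    have hne : ({E' : Multiset (Sym2 V) | mesSol E E'}).Nonempty :=
      ⟨E, le_refl _, hconn, heven⟩
    obtain ⟨Emin, hEmin, hmin⟩ := Set.exists_min_image _ (mesWeight w) hfin hne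
    have hfin2 : {E' : Multiset (Sym2 V) |
        mesSol E E' ∧ mesWeight w E' = mesWeight w Emin}.Finite :=
      hfin.subset (fun E' h => h.1)
    obtain ⟨Eb, ⟨hEb, hEbw⟩, hbmin⟩ :=
      Set.exists_min_image _ (fun F => Multiset.card F) hfin2 ⟨Emin, hEmin, rfl⟩
    refine ⟨Eb, hEb, fun E'' h => hEbw ▸ hmin E'' h, ?_⟩
    intro e
    by_contra hcount
    have h3 : 3 ≤ Eb.count e := by omega
    have hs' := sol_reduce hEb h3
    have hwsub := mesWeight_sub_pair w (F := Eb) (e := e) (by omega)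
    have hge : mesWeight w Emin ≤ mesWeight w (Eb - {e, e}) := hmin _ hs'
    have hwe0 : w e = 0 := by
      have := hw e
      rw [hwsub, hEbw] at hge
      linarith
    have hmemb : (Eb - {e, e}) ∈ {E' : Multiset (Sym2 V) |
        mesSol E E' ∧ mesWeight w E' = mesWeight w Emin} := by
      refine ⟨hs', ?_⟩
      rw [hwsub, hwe0, hEbw]
      ring
    have hcard := hbmin _ hmemb
    have hcard2 := card_sub_pair (F := Eb) (e := e) (by omega)
    omega
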